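/- Let A in R^{(D+1)×(D+1)} be symmetric and J_D-diagonalizable, i.e., A J_D V = V J_D Λ for some invertible V and diagonal Λ whose diagonal entries have pairwise distinct absolute values. Then the columns of V are pairwise Lorentz-orthogonal: [v_i, v_j] = 0 for i ≠ j. -/
import Mathlib


open Matrix BigOperators

/-- The Lorentz signature matrix J_D = diag(-1, 1, …, 1) over ℝ. -/
noncomputable def JmatR (D : ℕ) : Matrix (Fin (D + 1)) (Fin (D + 1)) ℝ :=
  Matrix.diagonal (fun i => if i = 0 then (-1 : ℝ) else 1)

/-- If A is symmetric and J_D-diagonalizable, A J_D V = V J_D Λ with V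
invertible and Λ diagonal with pairwise distinct absolute values, then the columns of V
are pairwise Lorentz-orthogonal. -/
theorem j_diagonalizable_columns_lorentz_orthogonal
    (D : ℕ) (A V : Matrix (Fin (D + 1)) (Fin (D + 1)) ℝ)
    (lam : Fin (D + 1) → ℝ)
    (hA : Aᵀ = A) (hV : IsUnit V.det)
    (hdiag : A * JmatR D * V = V * (JmatR D * Matrix.diagonal lam))
    (hdist : ∀ i j, i ≠ j → |lam i| ≠ |lam j|) :
    ∀ i j, i ≠ j →
      (fun k => V k i) ⬝ᵥ (JmatR D *ᵥ fun k => V k j) = 0 := by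
  intro i j hij
  set J := JmatR D with hJdef
  have hJ : Jᵀ = J := by
    simp [hJdef, JmatR, Matrix.diagonal_transpose]
  set μ : Fin (D + 1) → ℝ := fun k => (if k = 0 then (-1 : ℝ) else 1) * lam k with hμ
  have hJD : J * Matrix.diagonal lam = Matrix.diagonal μ := by
    simp [hJdef, JmatR, Matrix.diagonal_mul_diagonal, hμ]
  have hdiag' : A * J * V = V * Matrix.diagonal μ := by rw [← hJD]; exact hdiag
  set G := Vᵀ * J * V with hG
  have hGsymm : Gᵀ = G := by
    rw [hG]
    rw [Matrix.transpose_mul, Matrix.transpose_mul, Matrix.transpose_transpose, hJ,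
      Matrix.mul_assoc]
  have hS : Vᵀ * J * (A * J * V) = G * Matrix.diagonal μ := by
    rw [hdiag', hG]
    simp only [Matrix.mul_assoc]
  have hSsymm : (Vᵀ * J * (A * J * V))ᵀ = Vᵀ * J * (A * J * V) := by
    simp only [Matrix.transpose_mul, Matrix.transpose_transpose, hJ, hA]
    noncomm_ring
  have key : G * Matrix.diagonal μ = Matrix.diagonal μ * G := by
    have := hSsymm
    rw [hS] at this
    rw [Matrix.transpose_mul, Matrix.diagonal_transpose, hGsymm] at this
    rw [← this]
  have hentry : G i j * μ j = μ i * G i j := by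
    have := congrArg (fun M => M i j) key
    simpa [Matrix.mul_diagonal, Matrix.diagonal_mul] using this
  have hμne : μ i ≠ μ j := by
    intro h
    apply hdist i j hij
    have : |μ i| = |μ j| := by rw [h]
    have hi : |μ i| = |lam i| := by
      rw [hμ]; by_cases h0 : i = 0 <;> simp [h0, abs_mul]
    have hj : |μ j| = |lam j| := by
      rw [hμ]; by_cases h0 : j = 0 <;> simp [h0, abs_mul]
    rw [hi, hj] at this; exact this
  have hGij : G i j = 0 := by
    have h : G i j * (μ j - μ i) = 0 := by rw [mul_sub, hentry]; ring
    rcases mul_eq_zero.mp h with h' | h'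
    · exact h'
    · exact absurd (by linarith [sub_eq_zero.mp h'] : μ i = μ j) hμne
  have : (fun k => V k i) ⬝ᵥ (J *ᵥ fun k => V k j) = G i j := by
    rw [hG, Matrix.mul_assoc]
    simp [Matrix.mul_apply, dotProduct, Matrix.mulVec]
  rw [this, hGij]
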